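/- Let F, G : Fin (2^n) → R be defined by F(enc(T)) = f^{(i)}(T) and G(enc(T)) = g^{(j)}(T) (and 0 on non-encodings is vacuous since enc is a bijection onto [0, 2^n)). Then the cyclic/linear sequence convolution H(m) = Σ_{a+b=m} F(a) G(b), evaluated at m = enc(S) for a set S with |S| = i + j, equals Σ_{T ⊆ S, |T| = i} f(T) g(S \ T). -/

import Mathlib

open Finset

/-- encoding for finsets of naturals -/
def eN (T : Finset ℕ) : ℕ := ∑ t ∈ T, 2 ^ t

/-- shift a finset of naturals down by one, dropping 0 -/
def halfS (T : Finset ℕ) : Finset ℕ := (T.erase 0).image (· - 1)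

lemma eN_rec (T : Finset ℕ) : eN T = 2 * eN (halfS T) + (if 0 ∈ T then 1 else 0) := by
  classical
  have h1 : eN (halfS T) = ∑ t ∈ T.erase 0, 2 ^ (t - 1) := by
    rw [halfS, eN, Finset.sum_image]
    intro a ha b hb hab
    simp only at hab
    have ha0 : a ≠ 0 := Finset.ne_of_mem_erase ha
    have hb0 : b ≠ 0 := Finset.ne_of_mem_erase hb
    omega
  have h2 : 2 * eN (halfS T) = ∑ t ∈ T.erase 0, 2 ^ t := by
    rw [h1, Finset.mul_sum]
    refine Finset.sum_congr rfl fun t ht => ?_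
    have ht0 : t ≠ 0 := Finset.ne_of_mem_erase ht
    obtain ⟨u, rfl⟩ := Nat.exists_eq_succ_of_ne_zero ht0
    simp [pow_succ, mul_comm]
  rw [h2]
  by_cases h : 0 ∈ T
  · rw [if_pos h, eN, ← Finset.add_sum_erase _ _ h]
    simp [add_comm]
  · rw [if_neg h, eN, Finset.erase_eq_of_notMem h, add_zero]

lemma mem_halfS {T : Finset ℕ} {k : ℕ} : k ∈ halfS T ↔ k + 1 ∈ T := by
  simp only [halfS, Finset.mem_image, Finset.mem_erase]
  constructor
  · rintro ⟨a, ⟨ha0, ha⟩, rfl⟩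
    have : a - 1 + 1 = a := by omega
    rwa [this]
  · intro h; exact ⟨k + 1, ⟨by omega, h⟩, by omega⟩

lemma testBit_eN (k : ℕ) (T : Finset ℕ) : (eN T).testBit k = true ↔ k ∈ T := by
  induction k generalizing T with
  | zero =>
    rw [Nat.testBit_zero, eN_rec T]
    by_cases h : 0 ∈ T <;> simp [h, Nat.add_mul_mod_self_left, Nat.mul_add_mod]
  | succ k ih =>
    rw [Nat.testBit_succ]
    have : eN T / 2 = eN (halfS T) := by
      rw [eN_rec T]; split <;> omega
    rw [this, ih, mem_halfS]

lemma eN_injective : Function.Injective eN := by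
  intro A B h
  ext k
  rw [← testBit_eN k A, ← testBit_eN k B, h]

/-- binary digit sum -/
def dsum (m : ℕ) : ℕ := (Nat.digits 2 m).sum

lemma dsum_rec (m : ℕ) : dsum m = m % 2 + dsum (m / 2) := by
  rcases Nat.eq_zero_or_pos m with rfl | hm
  · simp [dsum]
  · rw [dsum, Nat.digits_def' (by norm_num) hm]
    simp [dsum, add_comm]

lemma dsum_one : dsum 1 = 1 := by simp [dsum]

lemma dsum_eN (T : Finset ℕ) : dsum (eN T) = T.card := by
  classical
  generalize hm : eN T = m
  induction m using Nat.strong_induction_on generalizing T with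
  | _ m ih =>
    rcases Nat.eq_zero_or_pos m with rfl | hm0
    · have : T = ∅ := by
        by_contra h
        obtain ⟨t, ht⟩ := Finset.nonempty_iff_ne_empty.mpr h
        have : 0 < eN T := Finset.sum_pos' (fun _ _ => Nat.zero_le _)
          ⟨t, ht, Nat.pow_pos (by norm_num)⟩
        omega
      simp [this, dsum]
    · have hr := eN_rec T
      rw [hm] at hr
      have hite : (if 0 ∈ T then 1 else 0) ≤ 1 := by split <;> omega
      have hlt : eN (halfS T) < m := by omega
      have hcard : T.card = (halfS T).card + (if 0 ∈ T then 1 else 0) := by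
        have h1 : (halfS T).card = (T.erase 0).card := by
          rw [halfS]
          apply Finset.card_image_of_injOn
          intro a ha b hb hab
          simp only at hab
          have ha0 : a ≠ 0 := Finset.ne_of_mem_erase ha
          have hb0 : b ≠ 0 := Finset.ne_of_mem_erase hb
          omega
        rw [h1]
        by_cases h : 0 ∈ T
        · rw [if_pos h, Finset.card_erase_of_mem h]
          have := Finset.card_pos.mpr ⟨0, h⟩
          omega
        · rw [if_neg h, Finset.erase_eq_of_notMem h, add_zero]
      rw [dsum_rec]
      have hmod : m % 2 = (if 0 ∈ T then 1 else 0) := by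
        by_cases h : 0 ∈ T <;> simp only [h, if_true, if_false] at hr ⊢ <;> omega
      have hdiv : m / 2 = eN (halfS T) := by
        by_cases h : 0 ∈ T <;> simp only [h, if_true, if_false] at hr <;> omega
      rw [hmod, hdiv, ih _ hlt _ rfl, hcard, add_comm]

lemma dsum_add_aux : ∀ m a b : ℕ, a + b = m →
    dsum (a + b) ≤ dsum a + dsum b ∧
    (dsum (a + b) = dsum a + dsum b →
      ∀ k, a.testBit k = true → b.testBit k = true → False) := by
  intro m
  induction m using Nat.strong_induction_on with
  | _ m ih =>
    intro a b hab
    rcases Nat.eq_zero_or_pos m with rfl | hm0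
    · have ha : a = 0 := by omega
      have hb : b = 0 := by omega
      subst ha hb
      refine ⟨by simp, fun _ k h1 _ => ?_⟩
      simp [Nat.zero_testBit] at h1
    · have ha2 := Nat.div_add_mod a 2
      have hb2 := Nat.div_add_mod b 2
      set a' := a / 2 with ha'
      set b' := b / 2 with hb'
      have hra : a % 2 < 2 := Nat.mod_lt _ (by norm_num)
      have hrb : b % 2 < 2 := Nat.mod_lt _ (by norm_num)
      have hda : dsum a = a % 2 + dsum a' := dsum_rec a
      have hdb : dsum b = b % 2 + dsum b' := dsum_rec b
      by_cases hcase : a % 2 = 1 ∧ b % 2 = 1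
      · -- carry case: strict inequality
        have habdiv : (a + b) / 2 = a' + b' + 1 := by omega
        have habmod : (a + b) % 2 = 0 := by omega
        have hdab : dsum (a + b) = dsum (a' + b' + 1) := by
          rw [dsum_rec (a + b), habdiv, habmod, zero_add]
        have h1 : a' + b' + 1 < m := by omega
        have h2 : a' + b' < m := by omega
        have i1 := (ih _ h1 (a' + b') 1 rfl).1
        have i2 := (ih _ h2 a' b' rfl).1
        rw [dsum_one] at i1
        constructor
        · omega
        · omega
      · -- no carry at bit 0
        have hr : a % 2 + b % 2 ≤ 1 := by omega
        have habdiv : (a + b) / 2 = a' + b' := by omega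
        have habmod : (a + b) % 2 = a % 2 + b % 2 := by omega
        have hdab : dsum (a + b) = a % 2 + b % 2 + dsum (a' + b') := by
          rw [dsum_rec (a + b), habdiv, habmod]
        have h2 : a' + b' < m := by omega
        have i2 := ih _ h2 a' b' rfl
        constructor
        · omega
        · intro heq k
          have heq' : dsum (a' + b') = dsum a' + dsum b' := by omega
          cases k with
          | zero =>
            rw [Nat.testBit_zero, Nat.testBit_zero]
            intro h1 h2'
            simp only [decide_eq_true_eq] at h1 h2'
            omega
          | succ k =>
            rw [Nat.testBit_succ, Nat.testBit_succ]
            exact i2.2 heq' k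

lemma key_nat {A B S : Finset ℕ} (h : eN A + eN B = eN S)
    (hc : A.card + B.card = S.card) : Disjoint A B ∧ A ∪ B = S := by
  classical
  have heq : dsum (eN A + eN B) = dsum (eN A) + dsum (eN B) := by
    rw [h, dsum_eN, dsum_eN, dsum_eN, hc]
  have hbit := (dsum_add_aux _ (eN A) (eN B) rfl).2 heq
  have hdisj : Disjoint A B := by
    rw [Finset.disjoint_left]
    intro x hxA hxB
    exact hbit x ((testBit_eN x A).mpr hxA) ((testBit_eN x B).mpr hxB)
  refine ⟨hdisj, ?_⟩
  apply eN_injective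
  rw [eN, Finset.sum_union hdisj, ← eN, ← eN, h]

def enc {n : ℕ} (T : Finset (Fin n)) : ℕ := ∑ t ∈ T, 2 ^ (t : ℕ)

def chop {R : Type*} [CommRing R] {n : ℕ}
    (f : Finset (Fin n) → R) (i : ℕ) (T : Finset (Fin n)) : R :=
  if T.card = i then f T else 0

/-- `seqEnc f i a` is `chop f i (enc⁻¹ a)` when `a < 2^n` and `0` otherwise:
since `enc` is a bijection onto `[0, 2^n)`, this sum has at most one term. -/
def seqEnc {R : Type*} [CommRing R] {n : ℕ}
    (f : Finset (Fin n) → R) (i : ℕ) (a : ℕ) : R :=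
  ∑ T ∈ Finset.univ.filter (fun T : Finset (Fin n) => enc T = a), chop f i T

lemma enc_eq_eN {n : ℕ} (T : Finset (Fin n)) : enc T = eN (T.image Fin.val) := by
  rw [eN, Finset.sum_image (fun a _ b _ h => Fin.val_injective h)]
  rfl

lemma key_fin {n : ℕ} {T1 T2 S : Finset (Fin n)} (h : enc T1 + enc T2 = enc S)
    (hc : T1.card + T2.card = S.card) : Disjoint T1 T2 ∧ T1 ∪ T2 = S := by
  have hinj : Function.Injective (Fin.val : Fin n → ℕ) := Fin.val_injective
  obtain ⟨hd, hu⟩ := key_nat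
    (A := T1.image Fin.val) (B := T2.image Fin.val) (S := S.image Fin.val)
    (by rw [← enc_eq_eN, ← enc_eq_eN, ← enc_eq_eN]; exact h)
    (by rw [Finset.card_image_of_injective _ hinj, Finset.card_image_of_injective _ hinj,
          Finset.card_image_of_injective _ hinj]; exact hc)
  constructor
  · rw [Finset.disjoint_left] at hd ⊢
    intro a h1 h2
    exact hd (Finset.mem_image_of_mem _ h1) (Finset.mem_image_of_mem _ h2)
  · apply Finset.image_injective hinj
    rw [Finset.image_union]; exact hu

theorem seq_conv_at_enc {R : Type*} [CommRing R] {n i j : ℕ}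
    (f g : Finset (Fin n) → R) (S : Finset (Fin n)) (hS : S.card = i + j) :
    ∑ p ∈ Finset.HasAntidiagonal.antidiagonal (enc S), seqEnc f i p.1 * seqEnc g j p.2
      = ∑ T ∈ S.powerset.filter (fun T => T.card = i), f T * g (S \ T) := by
  classical
  have lhs_eq : ∀ p ∈ Finset.HasAntidiagonal.antidiagonal (enc S),
      seqEnc f i p.1 * seqEnc g j p.2 =
      ∑ T1 : Finset (Fin n), ∑ T2 : Finset (Fin n),
        if (enc T1, enc T2) = p then chop f i T1 * chop g j T2 else 0 := by
    intro p _
    rw [seqEnc, seqEnc, Finset.sum_filter, Finset.sum_filter, Finset.sum_mul_sum]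
    refine Finset.sum_congr rfl fun T1 _ => Finset.sum_congr rfl fun T2 _ => ?_
    by_cases h1 : enc T1 = p.1 <;> by_cases h2 : enc T2 = p.2 <;>
      simp [h1, h2, Prod.ext_iff]
  rw [Finset.sum_congr rfl lhs_eq, Finset.sum_comm]
  have swap2 : ∀ T1 : Finset (Fin n),
      (∑ p ∈ Finset.HasAntidiagonal.antidiagonal (enc S), ∑ T2 : Finset (Fin n),
        if (enc T1, enc T2) = p then chop f i T1 * chop g j T2 else 0)
      = ∑ T2 : Finset (Fin n),
          if enc T1 + enc T2 = enc S then chop f i T1 * chop g j T2 else 0 := by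
    intro T1
    rw [Finset.sum_comm]
    refine Finset.sum_congr rfl fun T2 _ => ?_
    rw [Finset.sum_ite_eq (Finset.HasAntidiagonal.antidiagonal (enc S)) (enc T1, enc T2)
      (fun _ => chop f i T1 * chop g j T2)]
    simp [Finset.mem_antidiagonal]
  rw [Finset.sum_congr rfl (fun T1 _ => swap2 T1)]
  have point : ∀ T1 T2 : Finset (Fin n),
      (if enc T1 + enc T2 = enc S then chop f i T1 * chop g j T2 else 0)
      = if T2 = S \ T1 then
          (if T1 ⊆ S ∧ T1.card = i then f T1 * g T2 else 0) else 0 := by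
    intro T1 T2
    unfold chop
    by_cases he : enc T1 + enc T2 = enc S
    · rw [if_pos he]
      by_cases h1 : T1.card = i
      · by_cases h2 : T2.card = j
        · have hc : T1.card + T2.card = S.card := by rw [h1, h2, hS]
          obtain ⟨hd, hu⟩ := key_fin he hc
          have hsub : T1 ⊆ S := hu ▸ Finset.subset_union_left
          have hT2 : T2 = S \ T1 := by
            rw [← hu, Finset.union_sdiff_cancel_left hd]
          rw [if_pos h1, if_pos h2, if_pos hT2,
            if_pos (show T1 ⊆ S ∧ T1.card = i from ⟨hsub, h1⟩)]
        · rw [if_pos h1, if_neg h2, mul_zero]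
          by_cases hT2 : T2 = S \ T1
          · rw [if_pos hT2]
            by_cases hA : T1 ⊆ S ∧ T1.card = i
            · exfalso; apply h2
              rw [hT2, Finset.card_sdiff_of_subset hA.1, hS, hA.2]
              omega
            · rw [if_neg hA]
          · rw [if_neg hT2]
      · rw [if_neg h1, zero_mul]
        by_cases hT2 : T2 = S \ T1
        · rw [if_pos hT2, if_neg (fun hA => h1 hA.2)]
        · rw [if_neg hT2]
    · rw [if_neg he]
      by_cases hT2 : T2 = S \ T1
      · rw [if_pos hT2]
        by_cases hA : T1 ⊆ S ∧ T1.card = i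
        · exfalso; apply he
          rw [hT2, enc, enc, enc, ← Finset.sum_union Finset.disjoint_sdiff,
            Finset.union_sdiff_of_subset hA.1]
        · rw [if_neg hA]
      · rw [if_neg hT2]
  rw [Finset.sum_congr rfl (fun T1 _ => Finset.sum_congr rfl (fun T2 _ => point T1 T2))]
  have collapse : ∀ T1 : Finset (Fin n),
      (∑ T2 : Finset (Fin n), if T2 = S \ T1 then
          (if T1 ⊆ S ∧ T1.card = i then f T1 * g T2 else 0) else 0)
      = if T1 ⊆ S ∧ T1.card = i then f T1 * g (S \ T1) else 0 := by
    intro T1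
    rw [Finset.sum_ite_eq' Finset.univ (S \ T1)
      (fun T2 => if T1 ⊆ S ∧ T1.card = i then f T1 * g T2 else 0)]
    simp
  rw [Finset.sum_congr rfl (fun T1 _ => collapse T1)]
  have hset : S.powerset.filter (fun T => T.card = i)
      = Finset.univ.filter (fun T => T ⊆ S ∧ T.card = i) := by
    ext T; simp [Finset.mem_powerset]
  rw [hset, Finset.sum_filter]
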